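/- arXiv:1808.06326 — 4 statements merged into one kernel-verified Lean document; each statement's English description precedes it below -/
import Mathlib

section
/- Let F be a differential field of characteristic zero and K ⊆ F a differential subfield such that F is a finite (algebraic) extension of K and the field of constants of F equals the field of constants C of K. Suppose f ∈ K can be written as f = g₀' + Σ_{i=1}^q λ_i·g_i'/g_i with g₀ ∈ F, g₁, …, g_q ∈ F nonzero, and λ₁, …, λ_q ∈ C. Then f can be written in the same form with all data in K: there exist r₀ ∈ K, nonzero r₁, …, r_m ∈ K and constants μ₁, …, μ_m ∈ C such that f = r₀' + Σ_{j=1}^m μ_j·r_j'/r_j. -/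
section GenDeriv

variable {R : Type*} [CommRing R] (D : R → R)
  (hadd : ∀ a b, D (a + b) = D a + D b)
  (hmul : ∀ a b, D (a * b) = a * D b + b * D a)

include hadd in
lemma ad_D_zero : D 0 = 0 := by
  have := hadd 0 0; simpa using this.symm

include hadd in
lemma ad_D_neg (a : R) : D (-a) = - D a := by
  have h := hadd a (-a)
  rw [add_neg_cancel, ad_D_zero D hadd] at h
  linear_combination -h

include hadd hmul in
lemma ad_D_one : D 1 = 0 := by
  have := (hmul 1 1).symm
  simp only [mul_one, one_mul] at this
  exact add_eq_right.mp this

include hadd hmul in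
lemma ad_D_natCast (n : ℕ) : D (n : R) = 0 := by
  induction n with
  | zero => simpa using ad_D_zero D hadd
  | succ k ih => rw [Nat.cast_succ, hadd, ih, ad_D_one D hadd hmul, add_zero]

include hadd hmul in
lemma ad_D_intCast (n : ℤ) : D (n : R) = 0 := by
  induction n using Int.rec with
  | ofNat k => simpa using ad_D_natCast D hadd hmul k
  | negSucc k =>
      rw [Int.cast_negSucc, ad_D_neg D hadd, ad_D_natCast D hadd hmul, neg_zero]

include hadd in
lemma ad_D_sum {ι : Type*} (s : Finset ι) (f : ι → R) :
    D (∑ i ∈ s, f i) = ∑ i ∈ s, D (f i) :=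
  map_sum (AddMonoidHom.mk' D hadd) f s

include hadd hmul in
lemma ad_D_prod {ι : Type*} [DecidableEq ι] (s : Finset ι) (f : ι → R) :
    D (∏ i ∈ s, f i) = ∑ j ∈ s, (∏ i ∈ s.erase j, f i) * D (f j) := by
  classical
  induction s using Finset.induction_on with
  | empty => simpa using ad_D_one D hadd hmul
  | insert a s ha ih =>
      rw [Finset.prod_insert ha, hmul, ih, Finset.sum_insert ha, Finset.erase_insert ha,
        Finset.mul_sum, add_comm]
      congr 1
      apply Finset.sum_congr rfl
      intro j hj
      rw [Finset.erase_insert_of_ne (by rintro rfl; exact ha hj),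
        Finset.prod_insert (by simp [Finset.mem_erase, ha])]
      ring

include hadd hmul in
lemma ad_D_det {n : ℕ} (M : Matrix (Fin n) (Fin n) R) :
    D M.det = Matrix.trace (M.adjugate * M.map D) := by
  classical
  have h1 : D M.det = ∑ j, (M.updateCol j fun i => D (M i j)).det := by
    rw [Matrix.det_apply', ad_D_sum D hadd]
    have key : ∀ σ : Equiv.Perm (Fin n),
        D (((Equiv.Perm.sign σ : ℤ) : R) * ∏ i, M (σ i) i)
        = ∑ j, ((Equiv.Perm.sign σ : ℤ) : R) *
            ((∏ i ∈ Finset.univ.erase j, M (σ i) i) * D (M (σ j) j)) := by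
      intro σ
      rw [hmul, ad_D_intCast D hadd hmul, mul_zero, add_zero,
        ad_D_prod D hadd hmul, Finset.mul_sum]
    rw [Finset.sum_congr rfl fun σ _ => key σ, Finset.sum_comm]
    apply Finset.sum_congr rfl
    intro j _
    rw [Matrix.det_apply']
    apply Finset.sum_congr rfl
    intro σ _
    congr 1
    rw [← Finset.mul_prod_erase Finset.univ _ (Finset.mem_univ j), Matrix.updateCol_apply,
      if_pos rfl, mul_comm]
    congr 1
    exact Finset.prod_congr rfl fun i hi => by
      rw [Matrix.updateCol_apply, if_neg (Finset.ne_of_mem_erase hi)]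
  rw [h1, Matrix.trace]
  apply Finset.sum_congr rfl
  intro j _
  rw [← Matrix.cramer_apply, Matrix.cramer_eq_adjugate_mulVec]
  simp [Matrix.diag, Matrix.mulVec, Matrix.mul_apply, dotProduct, Matrix.map_apply]

end GenDeriv

set_option maxHeartbeats 1000000 in
/-- **Abel's Theorem** (algebraic case of the inductive step in Liouville's theorem).
Let `F` be a differential field of characteristic zero and `K ⊆ F` a differential
subfield such that `F` is a finite extension of `K` and the constants of `F` all lie
in `K` (so that the field of constants of `F` equals the field of constants `C` of `K`).
If `f ∈ K` is of the form `f = g₀' + ∑ λᵢ · gᵢ'/gᵢ` with `g₀ ∈ F`, nonzero `gᵢ ∈ F`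
and constants `λᵢ ∈ C`, then `f` admits such a representation with all data in `K`. -/
theorem abel_theorem {F : Type*} [Field F] [CharZero F] (D : F → F)
    (hadd : ∀ a b, D (a + b) = D a + D b)
    (hmul : ∀ a b, D (a * b) = a * D b + b * D a)
    (K : Subfield F) (hK : ∀ x ∈ K, D x ∈ K)
    (hfin : FiniteDimensional K F)
    (hconst : ∀ a : F, D a = 0 → a ∈ K)
    (f : F) (hf : f ∈ K)
    (q : ℕ) (g₀ : F) (g : Fin q → F) (lam : Fin q → F)
    (hg : ∀ i, g i ≠ 0)
    (hlam : ∀ i, lam i ∈ K ∧ D (lam i) = 0)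
    (heq : f = D g₀ + ∑ i, lam i * (D (g i) / g i)) :
    ∃ (m : ℕ) (r₀ : F) (r : Fin m → F) (mu : Fin m → F),
      r₀ ∈ K ∧ (∀ j, r j ∈ K ∧ r j ≠ 0) ∧
      (∀ j, mu j ∈ K ∧ D (mu j) = 0) ∧
      f = D r₀ + ∑ j, mu j * (D (r j) / r j) := by
  classical
  -- the restricted derivation on K
  set DK : K → K := fun a => ⟨D ↑a, hK ↑a a.2⟩ with hDKdef
  have hDKcoe : ∀ a : K, (DK a : F) = D ↑a := fun _ => rfl
  have hKadd : ∀ a b : K, DK (a + b) = DK a + DK b := by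
    intro a b
    apply Subtype.ext
    show D ((a : F) + (b : F)) = D ↑a + D ↑b
    exact hadd _ _
  have hKmul : ∀ a b : K, DK (a * b) = a * DK b + b * DK a := by
    intro a b
    apply Subtype.ext
    show D ((a : F) * (b : F)) = (a : F) * D ↑b + (b : F) * D ↑a
    exact hmul _ _
  -- basis and multiplication matrices
  set n := Module.finrank K F with hn
  let b : Module.Basis (Fin n) K F := Module.finBasis K F
  let Cm : Matrix (Fin n) (Fin n) K := Matrix.of fun i j => b.repr (D (b j)) i
  have hsmul : ∀ (c : K) (y : F), D (c • y) = c • D y + (DK c) • y := by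
    intro c y
    rw [Algebra.smul_def, Algebra.smul_def, Algebra.smul_def, hmul]
    show (c : F) * D y + y * D ↑c = (c : F) * D y + D ↑c * y
    ring
  -- the key matrix identity
  have hMD : ∀ x : F, Algebra.leftMulMatrix b (D x) = (Algebra.leftMulMatrix b x).map DK + Cm * Algebra.leftMulMatrix b x - Algebra.leftMulMatrix b x * Cm := by
    intro x
    ext i j
    rw [show Algebra.leftMulMatrix b (D x) i j = b.repr (D x * b j) i from Algebra.leftMulMatrix_eq_repr_mul b _ i j]
    have e3 : D x * b j = D (x * b j) - x * D (b j) := by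
      rw [hmul]; ring
    have e1 : D (x * b j) = ∑ i, (((Algebra.leftMulMatrix b x).map DK + Cm * Algebra.leftMulMatrix b x) i j) • b i := by
      conv_lhs => rw [← Module.Basis.sum_repr b (x * b j)]
      rw [ad_D_sum D hadd]
      have t1 : ∀ k, D (b.repr (x * b j) k • b k)
          = (Algebra.leftMulMatrix b x k j) • D (b k) + (DK (Algebra.leftMulMatrix b x k j)) • b k := by
        intro k
        rw [← Algebra.leftMulMatrix_eq_repr_mul b x k j] at *
        exact hsmul _ _
      rw [Finset.sum_congr rfl fun k _ => t1 k, Finset.sum_add_distrib]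
      have t2 : ∀ k, (Algebra.leftMulMatrix b x k j) • D (b k) = ∑ i, (Cm i k * Algebra.leftMulMatrix b x k j) • b i := by
        intro k
        conv_lhs => rw [← Module.Basis.sum_repr b (D (b k)), Finset.smul_sum]
        refine Finset.sum_congr rfl fun i _ => ?_
        rw [smul_smul]
        congr 1
        exact mul_comm _ _
      rw [Finset.sum_congr rfl fun k _ => t2 k, Finset.sum_comm]
      rw [← Finset.sum_add_distrib]
      refine Finset.sum_congr rfl fun i _ => ?_
      rw [← Finset.sum_smul, ← add_smul]
      congr 1
      rw [Matrix.add_apply, Matrix.map_apply, Matrix.mul_apply, add_comm]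
    have e2 : x * D (b j) = ∑ i, ((Algebra.leftMulMatrix b x * Cm) i j) • b i := by
      conv_lhs => rw [← Module.Basis.sum_repr b (D (b j)), Finset.mul_sum]
      have t3 : ∀ k, x * (b.repr (D (b j)) k • b k) = ∑ i, (Algebra.leftMulMatrix b x i k * Cm k j) • b i := by
        intro k
        rw [mul_smul_comm]
        conv_lhs => rw [show b.repr (D (b j)) k = Cm k j from rfl]
        conv_lhs => rw [show x * b k = ∑ i, (Algebra.leftMulMatrix b x i k) • b i by
          rw [← Module.Basis.sum_repr b (x * b k)]
          exact Finset.sum_congr rfl fun i _ => by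
            rw [← Algebra.leftMulMatrix_eq_repr_mul b x i k]]
        rw [Finset.smul_sum]
        refine Finset.sum_congr rfl fun i _ => ?_
        rw [smul_smul]
        congr 1
        exact mul_comm _ _
      rw [Finset.sum_congr rfl fun k _ => t3 k, Finset.sum_comm]
      refine Finset.sum_congr rfl fun i _ => ?_
      rw [← Finset.sum_smul, Matrix.mul_apply]
    rw [e3, e1, e2, ← Finset.sum_sub_distrib]
    have : ∑ i, ((((Algebra.leftMulMatrix b x).map DK + Cm * Algebra.leftMulMatrix b x) i j) • b i - ((Algebra.leftMulMatrix b x * Cm) i j) • b i)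
        = ∑ i, ((((Algebra.leftMulMatrix b x).map DK + Cm * Algebra.leftMulMatrix b x - Algebra.leftMulMatrix b x * Cm)) i j) • b i := by
      refine Finset.sum_congr rfl fun i _ => ?_
      rw [← sub_smul, Matrix.sub_apply]
    rw [this, Module.Basis.repr_sum_self]
  -- trace commutes with D
  have traceD : ∀ x : F, Algebra.trace K F (D x) = DK (Algebra.trace K F x) := by
    intro x
    rw [Algebra.trace_eq_matrix_trace b, Algebra.trace_eq_matrix_trace b, hMD x,
      Matrix.trace_sub, Matrix.trace_add, Matrix.trace_mul_comm (Cm) (Algebra.leftMulMatrix b x)]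
    rw [add_sub_cancel_right]
    unfold Matrix.trace
    rw [ad_D_sum DK hKadd]
    rfl
  -- logarithmic derivative of the norm
  have normD : ∀ x : F, x ≠ 0 →
      Algebra.norm K x * Algebra.trace K F (D x / x) = DK (Algebra.norm K x) := by
    intro x hx
    have hMxmul : Algebra.leftMulMatrix b (D x) = Algebra.leftMulMatrix b (D x / x) * Algebra.leftMulMatrix b x := by
      rw [← map_mul (Algebra.leftMulMatrix b), div_mul_cancel₀ _ hx]
    have h4 : Algebra.leftMulMatrix b (D x / x) * Algebra.leftMulMatrix b x * (Algebra.leftMulMatrix b x).adjugate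
        = ((Algebra.leftMulMatrix b x).map DK + Cm * Algebra.leftMulMatrix b x - Algebra.leftMulMatrix b x * Cm) * (Algebra.leftMulMatrix b x).adjugate := by
      rw [← hMxmul, hMD x]
    rw [Matrix.mul_assoc, Matrix.mul_adjugate, Matrix.mul_smul, Matrix.mul_one] at h4
    have h5 := congrArg Matrix.trace h4
    rw [Matrix.sub_mul, Matrix.add_mul, Matrix.trace_sub, Matrix.trace_add] at h5
    have h6 : Matrix.trace ((Algebra.leftMulMatrix b x).map DK * (Algebra.leftMulMatrix b x).adjugate) = DK ((Algebra.leftMulMatrix b x).det) := by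
      rw [Matrix.trace_mul_comm, ← ad_D_det DK hKadd hKmul]
    have h7 : Matrix.trace (Cm * Algebra.leftMulMatrix b x * (Algebra.leftMulMatrix b x).adjugate) = (Algebra.leftMulMatrix b x).det * Matrix.trace Cm := by
      rw [Matrix.mul_assoc, Matrix.mul_adjugate, Matrix.mul_smul, Matrix.mul_one,
        Matrix.trace_smul, smul_eq_mul]
    have h8 : Matrix.trace (Algebra.leftMulMatrix b x * Cm * (Algebra.leftMulMatrix b x).adjugate) = (Algebra.leftMulMatrix b x).det * Matrix.trace Cm := by
      rw [Matrix.trace_mul_comm, ← Matrix.mul_assoc, Matrix.adjugate_mul, Matrix.smul_mul,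
        Matrix.one_mul, Matrix.trace_smul, smul_eq_mul]
    rw [h6, h7, h8, Matrix.trace_smul, smul_eq_mul] at h5
    rw [Algebra.norm_eq_matrix_det b, Algebra.trace_eq_matrix_trace b, h5]
    ring
  -- positivity of the degree
  have hnpos : 0 < n := Module.finrank_pos
  have hnF : (n : F) ≠ 0 := Nat.cast_ne_zero.mpr hnpos.ne'
  have hDn : D ((n : F)) = 0 := ad_D_natCast D hadd hmul n
  have hDninv : D (((n : F))⁻¹) = 0 := by
    have h1 : D ((n : F) * ((n : F))⁻¹) = 0 := by
      rw [mul_inv_cancel₀ hnF]; exact ad_D_one D hadd hmul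
    rw [hmul, hDn, mul_zero, add_zero] at h1
    rcases mul_eq_zero.mp h1 with h | h
    · exact absurd h hnF
    · exact h
  -- package the data in K
  set fK : K := ⟨f, hf⟩ with hfK
  set lamK : Fin q → K := fun i => ⟨lam i, (hlam i).1⟩ with hlamK
  set T₀ : K := Algebra.trace K F g₀ with hT₀
  set N : Fin q → K := fun i => Algebra.norm K (g i) with hN
  have hNne : ∀ i, N i ≠ 0 := by
    intro i
    simp only [hN]
    rw [Algebra.norm_ne_zero_iff]
    exact hg i
  -- apply the trace to the hypothesis
  have h2 := congrArg (Algebra.trace K F) heq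
  rw [map_add, map_sum] at h2
  have h3 : Algebra.trace K F f = n • fK := by
    rw [show f = algebraMap K F fK from rfl, Algebra.trace_algebraMap]
  have h4 : ∀ i, Algebra.trace K F (lam i * (D (g i) / g i))
      = lamK i * (DK (N i) / N i) := by
    intro i
    have hsd : lamK i • (D (g i) / g i) = lam i * (D (g i) / g i) := by
      rw [Algebra.smul_def]; rfl
    rw [← hsd, map_smul, smul_eq_mul]
    congr 1
    rw [eq_div_iff (hNne i), mul_comm]
    exact normD (g i) (hg i)
  rw [h3, traceD g₀, Finset.sum_congr rfl fun i _ => h4 i] at h2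
  -- h2 : n • fK = DK T₀ + ∑ i, lamK i * (DK (N i) / N i)
  refine ⟨q, (T₀ : F) / (n : F), fun i => (N i : F), fun i => lam i / (n : F), ?_, ?_, ?_, ?_⟩
  · exact K.div_mem T₀.2 (natCast_mem K n)
  · refine fun i => ⟨(N i).2, ?_⟩
    show (N i : F) ≠ 0
    exact_mod_cast hNne i
  · intro i
    constructor
    · exact K.div_mem (hlam i).1 (natCast_mem K n)
    · show D (lam i / (n : F)) = 0
      rw [div_eq_mul_inv, hmul, (hlam i).2, hDninv, mul_zero, mul_zero, add_zero]
  · -- final identity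
    show f = D ((T₀ : F) / (n : F)) + ∑ i, (lam i / (n : F)) * (D ((N i : F)) / (N i : F))
    have hcoe := congrArg (K.subtype) h2
    simp only [map_add, map_sum, map_nsmul, map_mul, map_div₀] at hcoe
    have hDr₀ : D ((T₀ : F) / (n : F)) = (DK T₀ : F) / (n : F) := by
      rw [div_eq_mul_inv, div_eq_mul_inv, hmul, hDninv, mul_zero, zero_add,
        ← hDKcoe, mul_comm]
    apply mul_left_cancel₀ hnF
    rw [mul_add, Finset.mul_sum, hDr₀]
    have e0 : (n : F) * ((DK T₀ : F) / (n : F)) = (DK T₀ : F) :=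
      mul_div_cancel₀ _ hnF
    have e1 : ∀ i, (n : F) * (lam i / (n : F) * (D ((N i : F)) / (N i : F)))
        = (lam i : F) * ((DK (N i) : F) / (N i : F)) := by
      intro i
      rw [show D ((N i : F)) = (DK (N i) : F) from rfl, ← mul_assoc,
        mul_comm ((n : F)) (lam i / (n : F)), div_mul_cancel₀ _ hnF]
    rw [e0, Finset.sum_congr rfl fun i _ => e1 i]
    calc (n : F) * f = ((n • fK : K) : F) := by
          push_cast
          rw [nsmul_eq_mul]
      _ = _ := by
          rw [h2]
          push_cast
          rfl
end

section
/- Let F be a differential field of characteristic zero, K ⊆ F a differential subfield, and t ∈ F an element transcendental over K with t' = a'/a for some nonzero a ∈ K (t is a logarithm over K). Assume F = K(t) and that the field of constants of F equals the field of constants C of K. If f ∈ K can be written as f = g₀' + Σ_{i=1}^q λ_i·g_i'/g_i with g₀ ∈ F, g₁, …, g_q ∈ F nonzero and λ_i ∈ C, then there exist r₀ ∈ K, nonzero r₁, …, r_m ∈ K and μ₁, …, μ_m ∈ C such that f = r₀' + Σ_{j=1}^m μ_j·r_j'/r_j. -/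
open Polynomial UniqueFactorizationMonoid

namespace LiouvilleLog

structure Setup (F : Type*) [Field F] [CharZero F] where
  D : F → F
  hadd : ∀ x y, D (x + y) = D x + D y
  hmul : ∀ x y, D (x * y) = x * D y + y * D x
  K : Subfield F
  hK : ∀ x ∈ K, D x ∈ K
  t : F
  htrans : Transcendental K t
  a : F
  haK : a ∈ K
  ha : a ≠ 0
  ht : D t = D a / a
  hgen : Subfield.closure ((K : Set F) ∪ {t}) = ⊤
  hconst : ∀ x : F, D x = 0 → x ∈ K

namespace Setup

variable {F : Type*} [Field F] [CharZero F] (s : Setup F)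

theorem D_one : s.D 1 = 0 := by
  simpa using s.hmul 1 1

theorem D_zero : s.D 0 = 0 := by
  simpa using s.hadd 0 0

theorem D_neg (x : F) : s.D (-x) = - s.D x := by
  have h := s.hadd x (-x)
  simp [s.D_zero] at h
  linear_combination -h

theorem D_sub (x y : F) : s.D (x - y) = s.D x - s.D y := by
  rw [sub_eq_add_neg, s.hadd, s.D_neg]; ring

theorem D_natCast (n : ℕ) : s.D n = 0 := by
  induction n with
  | zero => simpa using s.D_zero
  | succ k ih => push_cast; rw [s.hadd, ih, s.D_one]; ring

theorem D_pow (x : F) (n : ℕ) : s.D (x ^ (n + 1)) = (n + 1) * x ^ n * s.D x := by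
  induction n with
  | zero => simp
  | succ k ih =>
    rw [pow_succ, s.hmul, ih, pow_succ]
    push_cast
    ring

theorem D_inv (x : F) (hx : x ≠ 0) : s.D x⁻¹ = -(s.D x / x ^ 2) := by
  have h := s.hmul x x⁻¹
  rw [mul_inv_cancel₀ hx, s.D_one] at h
  have hx2 : x ^ 2 ≠ 0 := pow_ne_zero _ hx
  have hx' : x * x⁻¹ = 1 := mul_inv_cancel₀ hx
  have goal' : s.D x⁻¹ * x ^ 2 = - s.D x := by
    linear_combination (-x) * h - s.D x * hx'
  rw [← neg_div, eq_div_iff hx2]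
  exact goal' 

theorem D_div (x y : F) (hy : y ≠ 0) : s.D (x / y) = (s.D x * y - x * s.D y) / y ^ 2 := by
  rw [div_eq_mul_inv, s.hmul, s.D_inv _ hy]
  field_simp
  ring

theorem logd_mul (x y : F) (hx : x ≠ 0) (hy : y ≠ 0) :
    s.D (x * y) / (x * y) = s.D x / x + s.D y / y := by
  rw [s.hmul]
  field_simp
  ring

theorem logd_div (x y : F) (hx : x ≠ 0) (hy : y ≠ 0) :
    s.D (x / y) / (x / y) = s.D x / x - s.D y / y := by
  rw [s.D_div _ _ hy]
  field_simp

-- Polynomial infrastructure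
noncomputable def dK : ↥s.K → ↥s.K := fun c => ⟨s.D c, s.hK _ c.2⟩

theorem dK_coe (c : ↥s.K) : (s.dK c : F) = s.D c := rfl

theorem dK_zero : s.dK 0 = 0 := by
  ext; simp [dK_coe, s.D_zero]

theorem dK_add (x y : ↥s.K) : s.dK (x + y) = s.dK x + s.dK y := by
  ext; push_cast [dK_coe]; exact s.hadd x y

theorem dK_one : s.dK 1 = 0 := by
  ext; simp [dK_coe, s.D_one]

noncomputable def tau : ↥s.K := ⟨s.D s.a / s.a, div_mem (s.hK _ s.haK) s.haK⟩

theorem tau_coe : (s.tau : F) = s.D s.t := by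
  rw [s.ht]; rfl

noncomputable def mapd (P : Polynomial ↥s.K) : Polynomial ↥s.K :=
  P.sum fun n c => monomial n (s.dK c)

theorem coeff_mapd (P : Polynomial ↥s.K) (k : ℕ) :
    (s.mapd P).coeff k = s.dK (P.coeff k) := by
  rw [mapd, Polynomial.coeff_sum]
  simp only [coeff_monomial]
  rw [Polynomial.sum_def]
  rw [Finset.sum_ite_eq' P.support k (fun n => s.dK (P.coeff n))]
  by_cases h : k ∈ P.support
  · simp [h]
  · simp [h, Polynomial.notMem_support_iff.mp h, s.dK_zero]

noncomputable def delta (P : Polynomial ↥s.K) : Polynomial ↥s.K :=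
  s.mapd P + C s.tau * derivative P

theorem coeff_delta (P : Polynomial ↥s.K) (k : ℕ) :
    (s.delta P).coeff k = s.dK (P.coeff k) + s.tau * (P.coeff (k + 1) * (k + 1)) := by
  rw [delta, coeff_add, coeff_C_mul, coeff_derivative, s.coeff_mapd]

noncomputable def phi : Polynomial ↥s.K →ₐ[↥s.K] F := aeval s.t

theorem algmap (c : ↥s.K) : algebraMap ↥s.K F c = (c : F) := rfl

theorem phi_C (c : ↥s.K) : s.phi (C c) = (c : F) := by
  simp only [phi, aeval_C]; rw [s.algmap]

theorem phi_inj : Function.Injective s.phi := by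
  have ht := transcendental_iff.mp s.htrans
  intro P Q h
  have : s.phi (P - Q) = 0 := by rw [map_sub, h, sub_self]
  have := ht _ this
  linear_combination this

theorem phi_ne_zero {P : Polynomial ↥s.K} (hP : P ≠ 0) : s.phi P ≠ 0 := by
  intro h
  exact hP (transcendental_iff.mp s.htrans P h)

theorem phi_delta (P : Polynomial ↥s.K) : s.D (s.phi P) = s.phi (s.delta P) := by
  induction P using Polynomial.induction_on' with
  | add p q hp hq =>
    have hd : s.delta (p + q) = s.delta p + s.delta q := by
      simp only [delta, mapd]
      rw [Polynomial.sum_add_index, derivative_add]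
      · ring
      · intro n; rw [s.dK_zero, monomial_zero_right]
      · intro n x y; rw [s.dK_add, map_add]
    rw [map_add, s.hadd, hp, hq, hd, map_add]
  | monomial n c =>
    have hm : s.phi (monomial n c) = (c : F) * s.t ^ n := by
      simp only [phi, aeval_monomial]; rw [s.algmap]
    have hdm : s.delta (monomial n c) =
        monomial n (s.dK c) + C s.tau * (monomial (n - 1) (c * n)) := by
      simp only [delta, derivative_monomial]
      congr 1
      rw [mapd, Polynomial.sum_monomial_index]
      rw [s.dK_zero, monomial_zero_right]
    rw [hm, hdm, map_add, map_mul]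
    have h1 : s.phi (monomial n (s.dK c)) = s.D (c : F) * s.t ^ n := by
      simp only [phi, aeval_monomial]; rw [s.algmap, s.dK_coe]
    have h2 : s.phi (C s.tau) = s.D s.t := by rw [phi_C, tau_coe]
    have h3 : s.phi (monomial (n - 1) (c * n)) = ((c : F) * n) * s.t ^ (n - 1) := by
      simp only [phi, aeval_monomial]; rw [s.algmap]; push_cast; ring
    rw [h1, h2, h3]
    cases n with
    | zero =>
      simp only [pow_zero, mul_one, Nat.cast_zero, mul_zero, zero_mul, add_zero]
    | succ m =>
      rw [s.hmul, s.D_pow]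
      push_cast
      ring

theorem delta_mul (P Q : Polynomial ↥s.K) :
    s.delta (P * Q) = P * s.delta Q + Q * s.delta P := by
  apply s.phi_inj
  rw [map_add, map_mul, map_mul, ← s.phi_delta, ← s.phi_delta, ← s.phi_delta, map_mul]
  exact s.hmul _ _

theorem delta_C (c : ↥s.K) : s.delta (C c) = C (s.dK c) := by
  apply s.phi_inj
  rw [← s.phi_delta, s.phi_C, s.phi_C, s.dK_coe]

theorem delta_pow (P : Polynomial ↥s.K) (m : ℕ) :
    s.delta (P ^ (m + 1)) = (m + 1 : Polynomial ↥s.K) * P ^ m * s.delta P := by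
  induction m with
  | zero => simp [s.delta_mul]
  | succ k ih =>
    rw [pow_succ, s.delta_mul, ih]
    push_cast
    ring

theorem natCast_ne_zero_poly (m : ℕ) : ((m : Polynomial ↥s.K) + 1) ≠ 0 := by
  have : ((m : Polynomial ↥s.K) + 1) = ((m + 1 : ℕ) : Polynomial ↥s.K) := by push_cast; ring
  rw [this]
  exact Nat.cast_ne_zero.mpr (Nat.succ_ne_zero m)

theorem degree_delta_lt {P : Polynomial ↥s.K} (hP : P.Monic) (h1 : 1 ≤ P.natDegree) :
    (s.delta P).degree < P.degree := by
  have hP0 : P ≠ 0 := hP.ne_zero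
  have : (s.delta P).degree < (P.natDegree : WithBot ℕ) := by
    rw [Polynomial.degree_lt_iff_coeff_zero]
    intro m hm
    rw [s.coeff_delta]
    rcases eq_or_lt_of_le hm with h | h
    · rw [← h, hP.coeff_natDegree]
      rw [coeff_eq_zero_of_natDegree_lt (by omega), s.dK_one]
      ring
    · rw [coeff_eq_zero_of_natDegree_lt (by omega),
        coeff_eq_zero_of_natDegree_lt (by omega), s.dK_zero]
      ring
  rwa [Polynomial.degree_eq_natDegree hP0]

theorem t_not_mem_K : s.t ∉ s.K := by
  intro hmem
  have h := transcendental_iff.mp s.htrans (X - C ⟨s.t, hmem⟩)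
  have hz : s.phi (X - C ⟨s.t, hmem⟩) = 0 := by
    rw [map_sub, s.phi_C]
    simp [phi]
  have := h hz
  exact X_sub_C_ne_zero (⟨s.t, hmem⟩ : ↥s.K) this

theorem mem_K_iff_exists (x : F) : x ∈ s.K ↔ ∃ c : ↥s.K, x = (c : F) :=
  ⟨fun h => ⟨⟨x, h⟩, rfl⟩, fun ⟨c, hc⟩ => hc ▸ c.2⟩

theorem delta_ne_zero {P : Polynomial ↥s.K} (hP : P.Monic) (h1 : 1 ≤ P.natDegree) :
    s.delta P ≠ 0 := by
  intro h
  have hD : s.D (s.phi P) = 0 := by rw [s.phi_delta, h, map_zero]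
  have hmem := s.hconst _ hD
  obtain ⟨c, hc⟩ := (s.mem_K_iff_exists _).mp hmem
  have : s.phi P = s.phi (C c) := by rw [s.phi_C, hc]
  have hPC := s.phi_inj this
  rw [hPC] at h1
  simp at h1

theorem not_dvd_delta {P : Polynomial ↥s.K} (hP : P.Monic) (h1 : 1 ≤ P.natDegree) :
    ¬ P ∣ s.delta P := by
  intro hdvd
  have hne := s.delta_ne_zero hP h1
  have := Polynomial.degree_le_of_dvd hdvd hne
  exact absurd (s.degree_delta_lt hP h1) (not_lt.mpr this)

theorem exists_rep (x : F) : ∃ A B : Polynomial ↥s.K, B ≠ 0 ∧ x = s.phi A / s.phi B := by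
  have hx : x ∈ Subfield.closure ((s.K : Set F) ∪ {s.t}) := by
    rw [s.hgen]; trivial
  induction hx using Subfield.closure_induction with
  | mem y hy =>
    rcases hy with hy | hy
    · exact ⟨C ⟨y, hy⟩, 1, one_ne_zero, by rw [map_one, s.phi_C]; simp⟩
    · refine ⟨X, 1, one_ne_zero, ?_⟩
      rw [Set.mem_singleton_iff] at hy
      subst hy
      rw [map_one]
      simp [phi]
  | one => exact ⟨1, 1, one_ne_zero, by simp⟩
  | add _ _ _ _ h1 h2 =>
    obtain ⟨A1, B1, hB1, e1⟩ := h1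
    obtain ⟨A2, B2, hB2, e2⟩ := h2
    refine ⟨A1 * B2 + A2 * B1, B1 * B2, mul_ne_zero hB1 hB2, ?_⟩
    rw [e1, e2, map_add, map_mul, map_mul, map_mul]
    rw [div_add_div _ _ (s.phi_ne_zero hB1) (s.phi_ne_zero hB2)]
    ring
  | neg _ _ h1 =>
    obtain ⟨A1, B1, hB1, e1⟩ := h1
    exact ⟨-A1, B1, hB1, by rw [e1, map_neg, neg_div]⟩
  | inv y _ h1 =>
    obtain ⟨A1, B1, hB1, e1⟩ := h1
    by_cases hA1 : A1 = 0
    · refine ⟨0, 1, one_ne_zero, ?_⟩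
      rw [e1, hA1, map_zero, zero_div, inv_zero, zero_div]
    · exact ⟨B1, A1, hA1, by rw [e1, inv_div]⟩
  | mul _ _ _ _ h1 h2 =>
    obtain ⟨A1, B1, hB1, e1⟩ := h1
    obtain ⟨A2, B2, hB2, e2⟩ := h2
    refine ⟨A1 * A2, B1 * B2, mul_ne_zero hB1 hB2, ?_⟩
    rw [e1, e2, map_mul, map_mul, div_mul_div_comm]

theorem exists_rep_min (x : F) : ∃ A B : Polynomial ↥s.K, B ≠ 0 ∧ x = s.phi A / s.phi B ∧
    ∀ p : Polynomial ↥s.K, Irreducible p → p ∣ B → ¬ p ∣ A := by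
  obtain ⟨A, B, hB, hx⟩ := s.exists_rep x
  have key : ∀ n : ℕ, ∀ A B : Polynomial ↥s.K, B ≠ 0 → B.natDegree ≤ n →
      x = s.phi A / s.phi B →
      ∃ A' B' : Polynomial ↥s.K, B' ≠ 0 ∧ x = s.phi A' / s.phi B' ∧
        ∀ p : Polynomial ↥s.K, Irreducible p → p ∣ B' → ¬ p ∣ A' := by
    intro n
    induction n with
    | zero =>
      intro A B hB hdeg hx
      refine ⟨A, B, hB, hx, fun p hp hpB hpA => ?_⟩
      have := Polynomial.natDegree_le_of_dvd hpB hB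
      have := hp.natDegree_pos
      omega
    | succ n ih =>
      intro A B hB hdeg hx
      by_cases hex : ∃ p : Polynomial ↥s.K, Irreducible p ∧ p ∣ B ∧ p ∣ A
      · obtain ⟨p, hp, ⟨B', rfl⟩, ⟨A', rfl⟩⟩ := hex
        have hp0 : p ≠ 0 := hp.ne_zero
        have hB' : B' ≠ 0 := fun h => hB (by rw [h, mul_zero])
        have hx' : x = s.phi A' / s.phi B' := by
          rw [hx, map_mul, map_mul, mul_div_mul_left _ _ (s.phi_ne_zero hp0)]
        have hdeg' : B'.natDegree ≤ n := by
          have := Polynomial.natDegree_mul hp0 hB'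
          have := hp.natDegree_pos
          omega
        exact ih A' B' hB' hdeg' hx'
      · push_neg at hex
        exact ⟨A, B, hB, hx, fun p hp hpB => hex p hp hpB⟩
  exact key B.natDegree A B hB le_rfl hx

theorem exists_pow_mul_not_dvd {p B : Polynomial ↥s.K} (hp : Irreducible p) (hB : B ≠ 0) :
    ∃ (n : ℕ) (B₁ : Polynomial ↥s.K), B = p ^ n * B₁ ∧ ¬ p ∣ B₁ := by
  have key : ∀ k : ℕ, ∀ B : Polynomial ↥s.K, B ≠ 0 → B.natDegree ≤ k →
      ∃ (n : ℕ) (B₁ : Polynomial ↥s.K), B = p ^ n * B₁ ∧ ¬ p ∣ B₁ := by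
    intro k
    induction k with
    | zero =>
      intro B hB hdeg
      refine ⟨0, B, by rw [pow_zero, one_mul], fun hdvd => ?_⟩
      have := Polynomial.natDegree_le_of_dvd hdvd hB
      have := hp.natDegree_pos
      omega
    | succ k ih =>
      intro B hB hdeg
      by_cases hdvd : p ∣ B
      · obtain ⟨B', rfl⟩ := hdvd
        have hp0 : p ≠ 0 := hp.ne_zero
        have hB' : B' ≠ 0 := fun h => hB (by rw [h, mul_zero])
        have hdeg' : B'.natDegree ≤ k := by
          have := Polynomial.natDegree_mul hp0 hB'
          have := hp.natDegree_pos
          omega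
        obtain ⟨n, B₁, hEq, hnd⟩ := ih B' hB' hdeg'
        exact ⟨n + 1, B₁, by rw [hEq, pow_succ]; ring, hnd⟩
      · exact ⟨0, B, by rw [pow_zero, one_mul], hdvd⟩
  exact key B.natDegree B hB le_rfl

theorem div_mul_cancel_aux (x b c : F) (hb : b ≠ 0) : x / b * (b * c) = x * c := by
  field_simp

theorem coeF {x y : ↥s.K} (h : x = y) : (x : F) = (y : F) := congrArg _ h

theorem coe_ne_zero {c : ↥s.K} (hc : c ≠ 0) : (c : F) ≠ 0 := by
  simpa using hc

set_option maxHeartbeats 2000000 in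
theorem key (u : F) (S : Finset (Polynomial ↥s.K)) (μ : Polynomial ↥s.K → F)
    (hS : ∀ p ∈ S, p.Monic ∧ Irreducible p)
    (hμK : ∀ p, μ p ∈ s.K)
    (w : F) (hw : w ∈ s.K)
    (heq : s.D u + ∑ p ∈ S, μ p * (s.D (s.phi p) / s.phi p) = w) :
    ∃ b c : F, b ∈ s.K ∧ c ∈ s.K ∧ s.D c = 0 ∧ w = s.D b + c * (s.D s.a / s.a) := by
  classical
  obtain ⟨A, B, hB, hu, hmin⟩ := s.exists_rep_min u
  set P : Polynomial ↥s.K := ∏ p ∈ S, p with hPdef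
  set μ' : Polynomial ↥s.K → ↥s.K := fun p => (⟨μ p, hμK p⟩ : ↥s.K) with hμ'def
  set w' : ↥s.K := ⟨w, hw⟩ with hw'def
  have hSirr : ∀ p ∈ S, Irreducible p := fun p hp => (hS p hp).2
  have hSne : ∀ p ∈ S, p ≠ 0 := fun p hp => (hSirr p hp).ne_zero
  have hP0 : P ≠ 0 := Finset.prod_ne_zero_iff.mpr hSne
  have hphiB : s.phi B ≠ 0 := s.phi_ne_zero hB
  have hphiBP : s.phi (B ^ 2 * P) ≠ 0 := s.phi_ne_zero (mul_ne_zero (pow_ne_zero _ hB) hP0)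
  -- not dividing the product of other monic irreducibles
  have hnotdvd : ∀ p₀ : Polynomial ↥s.K, p₀.Monic → Irreducible p₀ → ∀ T : Finset (Polynomial ↥s.K), (∀ r ∈ T, r ∈ S ∧ r ≠ p₀) →
      ¬ p₀ ∣ ∏ q ∈ T, q := by
    intro p₀ hmon hirr T hT hdvd
    rw [(hirr.prime).dvd_finset_prod_iff] at hdvd
    obtain ⟨r, hr, hdr⟩ := hdvd
    obtain ⟨hrS, hrne⟩ := hT r hr
    have : p₀ = r := Polynomial.eq_of_monic_of_associated hmon (hS r hrS).1
      (hirr.associated_of_dvd (hSirr r hrS) hdr)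
    exact hrne this.symm
  -- the cleared-denominator polynomial identity
  have hterm : ∀ p ∈ S, μ p * (s.D (s.phi p) / s.phi p) * s.phi (B ^ 2 * P)
      = s.phi (C (μ' p) * s.delta p * (∏ q ∈ S.erase p, q) * B ^ 2) := by
    intro p hp
    have hpne : s.phi p ≠ 0 := s.phi_ne_zero (hSne p hp)
    have h1 : s.phi (B ^ 2 * P) = s.phi p * s.phi ((∏ q ∈ S.erase p, q) * B ^ 2) := by
      rw [← map_mul]
      congr 1
      rw [hPdef, ← Finset.mul_prod_erase S (fun q => q) hp]
      ring
    rw [h1]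
    have h2 : μ p * (s.D (s.phi p) / s.phi p) * (s.phi p * s.phi ((∏ q ∈ S.erase p, q) * B ^ 2))
        = μ p * (s.D (s.phi p) * s.phi ((∏ q ∈ S.erase p, q) * B ^ 2)) := by
      rw [mul_assoc, div_mul_cancel_aux _ _ _ hpne]
    have hμc : ((μ' p : ↥s.K) : F) = μ p := rfl
    rw [h2, s.phi_delta]
    simp only [map_mul, map_pow]
    rw [s.phi_C, hμc]
    ring
  have hDu2 : s.D u * s.phi (B ^ 2 * P) = s.phi ((s.delta A * B - A * s.delta B) * P) := by
    rw [hu, s.D_div _ _ hphiB, s.phi_delta, s.phi_delta]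
    have h1 : s.phi (B ^ 2 * P) = (s.phi B) ^ 2 * s.phi P := by rw [map_mul, map_pow]
    rw [h1, div_mul_cancel_aux _ _ _ (pow_ne_zero 2 hphiB)]
    rw [map_mul, map_sub, map_mul, map_mul]
  have hpoly : (s.delta A * B - A * s.delta B) * P
      + ∑ p ∈ S, C (μ' p) * s.delta p * (∏ q ∈ S.erase p, q) * B ^ 2
      = C w' * (B ^ 2 * P) := by
    apply s.phi_inj
    have e1 : s.phi ((s.delta A * B - A * s.delta B) * P
        + ∑ p ∈ S, C (μ' p) * s.delta p * (∏ q ∈ S.erase p, q) * B ^ 2)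
        = (s.D u + ∑ p ∈ S, μ p * (s.D (s.phi p) / s.phi p)) * s.phi (B ^ 2 * P) := by
      rw [map_add, map_sum, add_mul, Finset.sum_mul, ← hDu2]
      congr 1
      exact (Finset.sum_congr rfl (fun p hp => (hterm p hp).symm))
    have hwc : ((w' : ↥s.K) : F) = w := rfl
    have e2 : s.phi (C w' * (B ^ 2 * P)) = w * s.phi (B ^ 2 * P) := by
      rw [map_mul, s.phi_C, hwc]
    rw [e1, e2, heq]
  -- Step: B is a unit
  have hBunit : IsUnit B := by
    by_contra hBu
    obtain ⟨q, hq, hqB⟩ := WfDvdMonoid.exists_irreducible_factor hBu hB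
    have hq0 : q ≠ 0 := hq.ne_zero
    set p₀ : Polynomial ↥s.K := q * C (q.leadingCoeff)⁻¹ with hp₀def
    have hmon : p₀.Monic := Polynomial.monic_mul_leadingCoeff_inv hq0
    have hlcu : IsUnit (C (q.leadingCoeff)⁻¹) := by
      rw [Polynomial.isUnit_C]
      exact (inv_ne_zero (Polynomial.leadingCoeff_ne_zero.mpr hq0)).isUnit
    have hassoc : Associated q p₀ := associated_mul_unit_right q _ hlcu
    have hirr₀ : Irreducible p₀ := hassoc.irreducible hq
    have hp₀B : p₀ ∣ B := hassoc.symm.dvd.trans hqB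
    have hp₀A : ¬ p₀ ∣ A := hmin p₀ hirr₀ hp₀B
    have hprime : Prime p₀ := hirr₀.prime
    have hp₀nd : 1 ≤ p₀.natDegree := hirr₀.natDegree_pos
    have hp₀δ : ¬ p₀ ∣ s.delta p₀ := s.not_dvd_delta hmon hp₀nd
    obtain ⟨n, B₁, hBdec, hp₀B₁⟩ := s.exists_pow_mul_not_dvd hirr₀ hB
    have hn : 1 ≤ n := by
      by_contra hn'
      push_neg at hn'
      interval_cases n
      rw [pow_zero, one_mul] at hBdec
      exact hp₀B₁ (hBdec ▸ hp₀B)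
    obtain ⟨m, rfl⟩ : ∃ m, n = m + 1 := ⟨n - 1, by omega⟩
    have hB₁0 : B₁ ≠ 0 := fun h => hB (by rw [hBdec, h, mul_zero])
    have hp₀0 : p₀ ≠ 0 := hirr₀.ne_zero
    set W : Polynomial ↥s.K := ((m : Polynomial ↥s.K) + 1) * s.delta p₀ * B₁ + p₀ * s.delta B₁ with hWdef
    have hδB : s.delta B = p₀ ^ m * W := by
      rw [hBdec, s.delta_mul, s.delta_pow, hWdef]
      ring
    have hmunit : IsUnit ((m : Polynomial ↥s.K) + 1) := by
      have : ((m : Polynomial ↥s.K) + 1) = C ((m : ↥s.K) + 1) := by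
        rw [map_add, map_one, Polynomial.C_eq_natCast]
      rw [this, Polynomial.isUnit_C]
      have : ((m : ↥s.K) + 1) ≠ 0 := by
        have : ((m : ↥s.K) + 1) = ((m + 1 : ℕ) : ↥s.K) := by push_cast; ring
        rw [this]
        exact Nat.cast_ne_zero.mpr (Nat.succ_ne_zero m)
      exact this.isUnit
    -- final contradiction, by cases on p₀ ∈ S
    by_cases hp₀S : p₀ ∈ S
    · have hPdec2 : P = p₀ * ∏ q ∈ S.erase p₀, q := (Finset.mul_prod_erase S (fun q => q) hp₀S).symm
      have hP₁ : ¬ p₀ ∣ ∏ q ∈ S.erase p₀, q := by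
        apply hnotdvd p₀ hmon hirr₀
        intro r hr
        exact ⟨Finset.mem_of_mem_erase hr, Finset.ne_of_mem_erase hr⟩
      have h1 : p₀ ^ (m + 2) ∣ s.delta A * B * P :=
        ⟨s.delta A * B₁ * ∏ q ∈ S.erase p₀, q, by rw [hBdec, hPdec2]; ring⟩
      have h2 : p₀ ^ (m + 2) ∣ ∑ p ∈ S, C (μ' p) * s.delta p * (∏ q ∈ S.erase p, q) * B ^ 2 := by
        apply Finset.dvd_sum
        intro p hp
        have : p₀ ^ (m + 2) ∣ B ^ 2 := ⟨p₀ ^ m * B₁ ^ 2, by rw [hBdec]; ring⟩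
        exact this.mul_left _
      have h3 : p₀ ^ (m + 2) ∣ C w' * (B ^ 2 * P) :=
        ⟨C w' * (p₀ ^ (m + 1) * B₁ ^ 2 * ∏ q ∈ S.erase p₀, q), by rw [hBdec, hPdec2]; ring⟩
      have h4 : p₀ ^ (m + 2) ∣ A * s.delta B * P := by
        have hre : A * s.delta B * P = s.delta A * B * P
            + (∑ p ∈ S, C (μ' p) * s.delta p * (∏ q ∈ S.erase p, q) * B ^ 2)
            - C w' * (B ^ 2 * P) := by linear_combination -hpoly
        rw [hre]
        exact dvd_sub (dvd_add h1 h2) h3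
      have h5 : p₀ ∣ A * W * ∏ q ∈ S.erase p₀, q := by
        have hre2 : A * s.delta B * P = p₀ ^ (m + 1) * (A * W * ∏ q ∈ S.erase p₀, q) := by
          rw [hδB, hPdec2]; ring
        rw [hre2] at h4
        have hpow : p₀ ^ (m + 2) = p₀ ^ (m + 1) * p₀ := by ring
        rw [hpow] at h4
        exact (mul_dvd_mul_iff_left (pow_ne_zero (m + 1) hp₀0)).mp h4
      rcases hprime.dvd_mul.mp h5 with h6 | h6
      · rcases hprime.dvd_mul.mp h6 with h7 | h7
        · exact hp₀A h7
        · have h8 : p₀ ∣ ((m : Polynomial ↥s.K) + 1) * s.delta p₀ * B₁ := by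
            have : ((m : Polynomial ↥s.K) + 1) * s.delta p₀ * B₁ = W - p₀ * s.delta B₁ := by
              rw [hWdef]; ring
            rw [this]
            exact dvd_sub h7 (dvd_mul_right _ _)
          rcases hprime.dvd_mul.mp h8 with h9 | h9
          · rcases hprime.dvd_mul.mp h9 with h10 | h10
            · exact hirr₀.not_isUnit (isUnit_of_dvd_unit h10 hmunit)
            · exact hp₀δ h10
          · exact hp₀B₁ h9
      · exact hP₁ h6
    · have hPnd : ¬ p₀ ∣ P := by
        rw [hPdef]
        apply hnotdvd p₀ hmon hirr₀
        intro r hr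
        exact ⟨hr, fun h => hp₀S (h ▸ hr)⟩
      have h1 : p₀ ^ (m + 1) ∣ s.delta A * B * P :=
        ⟨s.delta A * B₁ * P, by rw [hBdec]; ring⟩
      have h2 : p₀ ^ (m + 1) ∣ ∑ p ∈ S, C (μ' p) * s.delta p * (∏ q ∈ S.erase p, q) * B ^ 2 := by
        apply Finset.dvd_sum
        intro p hp
        have : p₀ ^ (m + 1) ∣ B ^ 2 := ⟨p₀ ^ (m + 1) * B₁ ^ 2, by rw [hBdec]; ring⟩
        exact this.mul_left _
      have h3 : p₀ ^ (m + 1) ∣ C w' * (B ^ 2 * P) := by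
        have hd : p₀ ^ (m + 1) ∣ B ^ 2 := ⟨p₀ ^ (m + 1) * B₁ ^ 2, by rw [hBdec]; ring⟩
        exact (hd.mul_right P).mul_left (C w')
      have h4 : p₀ ^ (m + 1) ∣ A * s.delta B * P := by
        have hre : A * s.delta B * P = s.delta A * B * P
            + (∑ p ∈ S, C (μ' p) * s.delta p * (∏ q ∈ S.erase p, q) * B ^ 2)
            - C w' * (B ^ 2 * P) := by linear_combination -hpoly
        rw [hre]
        exact dvd_sub (dvd_add h1 h2) h3
      have h5 : p₀ ∣ A * W * P := by
        have hre2 : A * s.delta B * P = p₀ ^ m * (A * W * P) := by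
          rw [hδB]; ring
        rw [hre2] at h4
        have hpow : p₀ ^ (m + 1) = p₀ ^ m * p₀ := by ring
        rw [hpow] at h4
        exact (mul_dvd_mul_iff_left (pow_ne_zero m hp₀0)).mp h4
      rcases hprime.dvd_mul.mp h5 with h6 | h6
      · rcases hprime.dvd_mul.mp h6 with h7 | h7
        · exact hp₀A h7
        · have h8 : p₀ ∣ ((m : Polynomial ↥s.K) + 1) * s.delta p₀ * B₁ := by
            have : ((m : Polynomial ↥s.K) + 1) * s.delta p₀ * B₁ = W - p₀ * s.delta B₁ := by
              rw [hWdef]; ring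
            rw [this]
            exact dvd_sub h7 (dvd_mul_right _ _)
          rcases hprime.dvd_mul.mp h8 with h9 | h9
          · rcases hprime.dvd_mul.mp h9 with h10 | h10
            · exact hirr₀.not_isUnit (isUnit_of_dvd_unit h10 hmunit)
            · exact hp₀δ h10
          · exact hp₀B₁ h9
      · exact hPnd h6
  -- Step: all μ p vanish
  obtain ⟨r, hrunit, hrC⟩ := Polynomial.isUnit_iff.mp hBunit
  have hr0 : r ≠ 0 := hrunit.ne_zero
  have hμ0 : ∀ p ∈ S, μ p = 0 := by
    intro p₀ hp₀S
    have hmon := (hS p₀ hp₀S).1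
    have hirr₀ := (hS p₀ hp₀S).2
    have hprime : Prime p₀ := hirr₀.prime
    have hp₀δ : ¬ p₀ ∣ s.delta p₀ := s.not_dvd_delta hmon hirr₀.natDegree_pos
    have hP₁ : ¬ p₀ ∣ ∏ q ∈ S.erase p₀, q := by
      apply hnotdvd p₀ hmon hirr₀
      intro r' hr'
      exact ⟨Finset.mem_of_mem_erase hr', Finset.ne_of_mem_erase hr'⟩
    have hd1 : p₀ ∣ (s.delta A * B - A * s.delta B) * P :=
      (Finset.dvd_prod_of_mem (fun q => q) hp₀S).mul_left _
    have hd2 : p₀ ∣ ∑ p ∈ S.erase p₀, C (μ' p) * s.delta p * (∏ q ∈ S.erase p, q) * B ^ 2 := by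
      apply Finset.dvd_sum
      intro p hp
      have hne : p₀ ≠ p := (Finset.ne_of_mem_erase hp).symm
      have hp₀mem : p₀ ∈ S.erase p := Finset.mem_erase.mpr ⟨hne, hp₀S⟩
      exact ((Finset.dvd_prod_of_mem (fun q => q) hp₀mem).mul_left _).mul_right _
    have hd3 : p₀ ∣ C w' * (B ^ 2 * P) :=
      ((Finset.dvd_prod_of_mem (fun q => q) hp₀S).mul_left _).mul_left _
    have hsum := Finset.add_sum_erase S
      (fun p => C (μ' p) * s.delta p * (∏ q ∈ S.erase p, q) * B ^ 2) hp₀S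
    have hsplit : C (μ' p₀) * s.delta p₀ * (∏ q ∈ S.erase p₀, q) * B ^ 2
        = C w' * (B ^ 2 * P) - (s.delta A * B - A * s.delta B) * P
          - ∑ p ∈ S.erase p₀, C (μ' p) * s.delta p * (∏ q ∈ S.erase p, q) * B ^ 2 := by
      linear_combination hsum + hpoly
    have hd4 : p₀ ∣ C (μ' p₀) * s.delta p₀ * (∏ q ∈ S.erase p₀, q) * B ^ 2 := by
      rw [hsplit]; exact dvd_sub (dvd_sub hd3 hd1) hd2
    have hBsq : IsUnit (B ^ 2) := hBunit.pow 2
    rcases hprime.dvd_mul.mp hd4 with h | h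
    · rcases hprime.dvd_mul.mp h with h | h
      · rcases hprime.dvd_mul.mp h with h | h
        · by_contra hμne
          have hCu : IsUnit (C (μ' p₀)) := by
            rw [Polynomial.isUnit_C]
            have hne : (μ' p₀ : ↥s.K) ≠ 0 := by
              intro h0
              apply hμne
              have h1 := congrArg (fun z : ↥s.K => (z : F)) h0
              simpa [hμ'def] using h1
            exact hne.isUnit
          exact hirr₀.not_isUnit (isUnit_of_dvd_unit h hCu)
        · exact (hp₀δ h).elim
      · exact (hP₁ h).elim
    · exact (hirr₀.not_isUnit (isUnit_of_dvd_unit h hBsq)).elim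
  have hsum0 : ∑ p ∈ S, μ p * (s.D (s.phi p) / s.phi p) = 0 :=
    Finset.sum_eq_zero fun p hp => by rw [hμ0 p hp, zero_mul]
  have hDuw : s.D u = w := by
    rw [hsum0, add_zero] at heq
    exact heq
  set U : Polynomial ↥s.K := A * C r⁻¹ with hUdef
  have hU : u = s.phi U := by
    rw [hUdef, map_mul, s.phi_C, hu, ← hrC, s.phi_C]
    rw [div_eq_mul_inv]
    congr 1
  have hδU : s.delta U = C w' := by
    apply s.phi_inj
    rw [← s.phi_delta, ← hU, hDuw, s.phi_C]
  have hUdeg : U.natDegree ≤ 1 := by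
    by_contra hN
    push_neg at hN
    have hU0 : U ≠ 0 := by
      intro h0
      rw [h0, natDegree_zero] at hN
      omega
    have hcN : U.coeff U.natDegree ≠ 0 := by
      have := Polynomial.leadingCoeff_ne_zero.mpr hU0
      rwa [Polynomial.leadingCoeff] at this
    have hc1 : s.dK (U.coeff U.natDegree) = 0 := by
      have hcoeff := congrArg (fun Q : Polynomial ↥s.K => Q.coeff U.natDegree) hδU
      simp only [s.coeff_delta] at hcoeff
      rw [Polynomial.coeff_C, if_neg (by omega : ¬ U.natDegree = 0)] at hcoeff
      rw [show U.coeff (U.natDegree + 1) = 0 from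
        coeff_eq_zero_of_natDegree_lt (by omega)] at hcoeff
      linear_combination hcoeff
    have hcoeff2 := congrArg (fun Q : Polynomial ↥s.K => Q.coeff (U.natDegree - 1)) hδU
    simp only [s.coeff_delta] at hcoeff2
    rw [Polynomial.coeff_C, if_neg (by omega : ¬ U.natDegree - 1 = 0)] at hcoeff2
    have hidx : U.natDegree - 1 + 1 = U.natDegree := by omega
    rw [hidx] at hcoeff2
    -- hcoeff2 : dK c_{N-1} + tau * (cN * N) = 0
    have hDcN : s.D ((U.coeff U.natDegree : F)) = 0 := by
      rw [← s.dK_coe, hc1, ZeroMemClass.coe_zero]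
    have h2 := s.coeF hcoeff2
    push_cast at h2
    rw [s.dK_coe, s.tau_coe] at h2
    have hNc : ((U.natDegree - 1 : ℕ) : F) + 1 = (U.natDegree : F) := by
      exact_mod_cast congrArg (fun n : ℕ => (n : F)) hidx
    rw [hNc] at h2
    -- h2 : D ↑c_{N-1} + D t * (↑cN * ↑N) = 0
    have hDx : s.D ((U.natDegree : F) * (U.coeff U.natDegree : F) * s.t
        + (U.coeff (U.natDegree - 1) : F)) = 0 := by
      rw [s.hadd, s.hmul]
      have h1 : s.D ((U.natDegree : F) * (U.coeff U.natDegree : F)) = 0 := by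
        rw [s.hmul, hDcN, s.D_natCast]; ring
      rw [h1]
      linear_combination h2
    have hxK := s.hconst _ hDx
    have hmemNc : (U.natDegree : F) * (U.coeff U.natDegree : F) ∈ s.K :=
      mul_mem (natCast_mem s.K U.natDegree) (U.coeff U.natDegree).2
    have hNcne : (U.natDegree : F) * (U.coeff U.natDegree : F) ≠ 0 :=
      mul_ne_zero (Nat.cast_ne_zero.mpr (by omega)) (s.coe_ne_zero hcN)
    have htK : s.t ∈ s.K := by
      have hts : s.t = ((U.natDegree : F) * (U.coeff U.natDegree : F))⁻¹ *
          (((U.natDegree : F) * (U.coeff U.natDegree : F) * s.t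
            + (U.coeff (U.natDegree - 1) : F)) - (U.coeff (U.natDegree - 1) : F)) := by
        rw [add_sub_cancel_right, inv_mul_cancel_left₀ hNcne]
      rw [hts]
      exact mul_mem (inv_mem hmemNc) (sub_mem hxK (U.coeff (U.natDegree - 1)).2)
    exact s.t_not_mem_K htK
  -- extract the two coefficients
  have hf1 : s.dK (U.coeff 1) = 0 := by
    have hcoeff := congrArg (fun Q : Polynomial ↥s.K => Q.coeff 1) hδU
    simp only [s.coeff_delta] at hcoeff
    rw [Polynomial.coeff_C, if_neg one_ne_zero] at hcoeff
    rw [show U.coeff (1 + 1) = 0 from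
      coeff_eq_zero_of_natDegree_lt (by omega)] at hcoeff
    linear_combination hcoeff
  have hcoeff0 := congrArg (fun Q : Polynomial ↥s.K => Q.coeff 0) hδU
  simp only [s.coeff_delta] at hcoeff0
  rw [Polynomial.coeff_C, if_pos rfl] at hcoeff0
  refine ⟨(U.coeff 0 : F), (U.coeff 1 : F), (U.coeff 0).2, (U.coeff 1).2, ?_, ?_⟩
  · rw [← s.dK_coe, hf1, ZeroMemClass.coe_zero]
  · have h0 := s.coeF hcoeff0
    push_cast at h0
    rw [s.dK_coe] at h0
    simp only [show (s.tau : F) = s.D s.a / s.a from rfl] at h0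
    linear_combination -h0

theorem logd_multiset (m : Multiset (Polynomial ↥s.K)) (hm : ∀ x ∈ m, x ≠ 0) :
    s.D (s.phi m.prod) / s.phi m.prod
      = (m.map (fun x => s.D (s.phi x) / s.phi x)).sum := by
  induction m using Multiset.induction_on with
  | empty => simp [s.D_one]
  | cons x m ih =>
    have hx : x ≠ 0 := hm x (Multiset.mem_cons_self x m)
    have hm' : ∀ y ∈ m, y ≠ 0 := fun y hy => hm y (Multiset.mem_cons_of_mem hy)
    have hprod : m.prod ≠ 0 := Multiset.prod_ne_zero (fun h0 => hm' 0 h0 rfl)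
    rw [Multiset.prod_cons, map_mul, Multiset.map_cons, Multiset.sum_cons,
      s.logd_mul _ _ (s.phi_ne_zero hx) (s.phi_ne_zero hprod), ih hm']

/-- a sum `∑ λᵢ (D gᵢ)/gᵢ` can be rewritten with denominators that are either in `K`
or images of monic irreducible polynomials. -/
def Rep (x : F) : Prop :=
  ∃ (S : Finset (Polynomial ↥s.K)) (μ : Polynomial ↥s.K → F) (L : List (F × F)),
    (∀ p ∈ S, p.Monic ∧ Irreducible p) ∧ (∀ p, μ p ∈ s.K) ∧ (∀ p ∉ S, μ p = 0) ∧
    (∀ z ∈ L, (z.1 ∈ s.K ∧ s.D z.1 = 0) ∧ (z.2 ∈ s.K ∧ z.2 ≠ 0)) ∧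
    x = (L.map fun z => z.1 * (s.D z.2 / z.2)).sum
      + ∑ p ∈ S, μ p * (s.D (s.phi p) / s.phi p)

theorem Rep.zero : s.Rep 0 := by
  exact ⟨∅, fun _ => 0, [], by simp, by simp [Subfield.zero_mem], by simp, by simp, by simp⟩

theorem Rep.add {x y : F} (hx : s.Rep x) (hy : s.Rep y) : s.Rep (x + y) := by
  classical
  obtain ⟨S₁, μ₁, L₁, hm₁, hK₁, h0₁, hL₁, he₁⟩ := hx
  obtain ⟨S₂, μ₂, L₂, hm₂, hK₂, h0₂, hL₂, he₂⟩ := hy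
  refine ⟨S₁ ∪ S₂, fun p => μ₁ p + μ₂ p, L₁ ++ L₂, ?_, ?_, ?_, ?_, ?_⟩
  · intro p hp
    rcases Finset.mem_union.mp hp with h | h
    · exact hm₁ p h
    · exact hm₂ p h
  · intro p
    exact add_mem (hK₁ p) (hK₂ p)
  · intro p hp
    rw [Finset.mem_union] at hp
    push_neg at hp
    simp only [h0₁ p hp.1, h0₂ p hp.2, add_zero]
  · intro z hz
    rcases List.mem_append.mp hz with h | h
    · exact hL₁ z h
    · exact hL₂ z h
  · have e1 : ∑ p ∈ S₁ ∪ S₂, (μ₁ p + μ₂ p) * (s.D (s.phi p) / s.phi p)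
        = ∑ p ∈ S₁, μ₁ p * (s.D (s.phi p) / s.phi p)
          + ∑ p ∈ S₂, μ₂ p * (s.D (s.phi p) / s.phi p) := by
      simp only [add_mul]
      rw [Finset.sum_add_distrib]
      congr 1
      · exact (Finset.sum_subset Finset.subset_union_left
          (fun p _ hp => by rw [h0₁ p hp, zero_mul])).symm
      · exact (Finset.sum_subset Finset.subset_union_right
          (fun p _ hp => by rw [h0₂ p hp, zero_mul])).symm
    rw [List.map_append, List.sum_append, e1, he₁, he₂]
    ring

theorem rep_poly (lam0 : F) (hl1 : lam0 ∈ s.K) (hl2 : s.D lam0 = 0)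
    (A : Polynomial ↥s.K) (hA : A ≠ 0) : s.Rep (lam0 * (s.D (s.phi A) / s.phi A)) := by
  classical
  obtain ⟨v, hv⟩ := UniqueFactorizationMonoid.prod_normalizedFactors hA
  obtain ⟨r, hrunit, hrC⟩ := Polynomial.isUnit_iff.mp v.isUnit
  have hr0 : r ≠ 0 := hrunit.ne_zero
  set m := UniqueFactorizationMonoid.normalizedFactors A with hmdef
  have hmne : ∀ x ∈ m, x ≠ 0 :=
    fun x hx => (UniqueFactorizationMonoid.irreducible_of_normalized_factor x hx).ne_zero
  have hprod : m.prod ≠ 0 := Multiset.prod_ne_zero (fun h0 => hmne 0 h0 rfl)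
  have hAeq : A = m.prod * C r := by rw [hrC, hv]
  have hlogd : s.D (s.phi A) / s.phi A
      = (m.map fun x => s.D (s.phi x) / s.phi x).sum + s.D (r : F) / (r : F) := by
    rw [hAeq, map_mul, s.phi_C,
      s.logd_mul _ _ (s.phi_ne_zero hprod) (s.coe_ne_zero hr0), s.logd_multiset m hmne]
  refine ⟨m.toFinset,
    fun p => if p ∈ m.toFinset then lam0 * (m.count p : F) else 0,
    [(lam0, (r : F))], ?_, ?_, ?_, ?_, ?_⟩
  · intro p hp
    have hpm := Multiset.mem_toFinset.mp hp
    have hirr := UniqueFactorizationMonoid.irreducible_of_normalized_factor p hpm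
    have hnorm := UniqueFactorizationMonoid.normalize_normalized_factor p hpm
    have hmon : p.Monic := by
      have := Polynomial.monic_normalize (p := p) hirr.ne_zero
      rwa [hnorm] at this
    exact ⟨hmon, hirr⟩
  · intro p
    by_cases hp : p ∈ m.toFinset
    · simp only [hp, if_true]
      exact mul_mem hl1 (natCast_mem s.K _)
    · simp only [hp, if_false]
      exact Subfield.zero_mem _
  · intro p hp
    simp only [hp, if_false]
  · intro z hz
    rw [List.mem_singleton] at hz
    subst hz
    exact ⟨⟨hl1, hl2⟩, ⟨(r : ↥s.K).2, s.coe_ne_zero hr0⟩⟩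
  · have hsum2 : ∑ p ∈ m.toFinset,
        (if p ∈ m.toFinset then lam0 * (m.count p : F) else 0) * (s.D (s.phi p) / s.phi p)
        = lam0 * ∑ p ∈ m.toFinset, (m.count p) • (s.D (s.phi p) / s.phi p) := by
      rw [Finset.mul_sum]
      apply Finset.sum_congr rfl
      intro p hp
      simp only [hp, if_true, nsmul_eq_mul]
      ring
    rw [hlogd, Finset.sum_multiset_map_count, hsum2]
    simp only [List.map_cons, List.map_nil, List.sum_cons, List.sum_nil, add_zero]
    ring

theorem rep_elem (lam0 g : F) (hl1 : lam0 ∈ s.K) (hl2 : s.D lam0 = 0) (hg : g ≠ 0) :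
    s.Rep (lam0 * (s.D g / g)) := by
  obtain ⟨A, B, hB, hgeq⟩ := s.exists_rep g
  have hA : A ≠ 0 := by
    intro h0
    rw [hgeq, h0, map_zero, zero_div] at hg
    exact hg rfl
  have hsplit : lam0 * (s.D g / g)
      = lam0 * (s.D (s.phi A) / s.phi A) + (-lam0) * (s.D (s.phi B) / s.phi B) := by
    rw [hgeq, s.logd_div _ _ (s.phi_ne_zero hA) (s.phi_ne_zero hB)]
    ring
  rw [hsplit]
  exact Rep.add s (s.rep_poly lam0 hl1 hl2 A hA)
    (s.rep_poly (-lam0) (neg_mem hl1) (by rw [s.D_neg, hl2, neg_zero]) B hB)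

theorem lsum_mem (L : List (F × F))
    (hL : ∀ z ∈ L, (z.1 ∈ s.K ∧ s.D z.1 = 0) ∧ (z.2 ∈ s.K ∧ z.2 ≠ 0)) :
    (L.map fun z => z.1 * (s.D z.2 / z.2)).sum ∈ s.K := by
  induction L with
  | nil =>
    rw [List.map_nil, List.sum_nil]
    exact zero_mem s.K
  | cons z L ih =>
    rw [List.map_cons, List.sum_cons]
    have hz := hL z List.mem_cons_self
    exact add_mem (mul_mem hz.1.1 (div_mem (s.hK _ hz.2.1) hz.2.1))
      (ih fun y hy => hL y (List.mem_cons_of_mem z hy))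

theorem list_sum_fin (L : List (F × F)) :
    ∑ j : Fin L.length, (L.get j).1 * (s.D (L.get j).2 / (L.get j).2)
      = (L.map fun z => z.1 * (s.D z.2 / z.2)).sum := by
  induction L with
  | nil => simp
  | cons z L ih =>
    rw [List.map_cons, List.sum_cons, ← ih]
    exact Fin.sum_univ_succ _

theorem rep_total (q : ℕ) (g : Fin q → F) (lam : Fin q → F)
    (hg : ∀ i, g i ≠ 0) (hlam : ∀ i, lam i ∈ s.K ∧ s.D (lam i) = 0) :
    s.Rep (∑ i, lam i * (s.D (g i) / g i)) := by
  classical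
  refine Finset.sum_induction _ s.Rep (fun a b ha hb => Rep.add s ha hb) (Rep.zero s) ?_
  intro i _
  exact s.rep_elem (lam i) (g i) (hlam i).1 (hlam i).2 (hg i)

end Setup
end LiouvilleLog

set_option maxHeartbeats 1000000 in
/-- Single-logarithm instance of the pure transcendental step (Theorem 7) in the
proof of Liouville's theorem. Let `F = K(t)` where `t` is transcendental over the
differential subfield `K` and `t' = a'/a` for some nonzero `a ∈ K` (a logarithm over
`K`), and assume the constants of `F` all lie in `K` (so the field of constants of
`F` equals the field of constants `C` of `K`). If `f ∈ K` has the form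
`f = g₀' + ∑ λᵢ · gᵢ'/gᵢ` with `g₀ ∈ F`, nonzero `gᵢ ∈ F` and constants `λᵢ ∈ C`,
then `f` admits such a representation with all data in `K`. -/
theorem liouville_step_logarithm {F : Type*} [Field F] [CharZero F] (D : F → F)
    (hadd : ∀ x y, D (x + y) = D x + D y)
    (hmul : ∀ x y, D (x * y) = x * D y + y * D x)
    (K : Subfield F) (hK : ∀ x ∈ K, D x ∈ K)
    (t : F) (htrans : Transcendental K t)
    (a : F) (haK : a ∈ K) (ha : a ≠ 0) (ht : D t = D a / a)
    (hgen : Subfield.closure ((K : Set F) ∪ {t}) = ⊤)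
    (hconst : ∀ x : F, D x = 0 → x ∈ K)
    (f : F) (hf : f ∈ K)
    (q : ℕ) (g₀ : F) (g : Fin q → F) (lam : Fin q → F)
    (hg : ∀ i, g i ≠ 0)
    (hlam : ∀ i, lam i ∈ K ∧ D (lam i) = 0)
    (heq : f = D g₀ + ∑ i, lam i * (D (g i) / g i)) :
    ∃ (m : ℕ) (r₀ : F) (r : Fin m → F) (mu : Fin m → F),
      r₀ ∈ K ∧ (∀ j, r j ∈ K ∧ r j ≠ 0) ∧
      (∀ j, mu j ∈ K ∧ D (mu j) = 0) ∧
      f = D r₀ + ∑ j, mu j * (D (r j) / r j) := by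
  let s : LiouvilleLog.Setup F :=
    ⟨D, hadd, hmul, K, hK, t, htrans, a, haK, ha, ht, hgen, hconst⟩
  have hsD : s.D = D := rfl
  have hsK : s.K = K := rfl
  have hsa : s.a = a := rfl
  obtain ⟨S, μ, L, hmon, hμK, hμ0, hL, hsum⟩ := s.rep_total q g lam hg hlam
  simp only [hsD, hsK, hsa] at hμK hL hsum
  have hKsum : (L.map fun z => z.1 * (D z.2 / z.2)).sum ∈ K := by
    have := s.lsum_mem L (by simpa [hsD, hsK] using hL)
    simpa [hsD, hsK] using this
  have hw : f - (L.map fun z => z.1 * (D z.2 / z.2)).sum ∈ K := sub_mem hf hKsum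
  have hkeyeq : s.D g₀ + ∑ p ∈ S, μ p * (s.D (s.phi p) / s.phi p)
      = f - (L.map fun z => z.1 * (D z.2 / z.2)).sum := by
    simp only [hsD]
    linear_combination -heq - hsum
  obtain ⟨b, c, hbK, hcK, hDc, hwe⟩ := s.key g₀ S μ hmon
    (by simpa [hsK] using hμK) _ (by simpa [hsK] using hw) hkeyeq
  simp only [hsD, hsK, hsa] at hbK hcK hDc hwe
  refine ⟨((c, a) :: L).length, b, fun j => ((((c, a) :: L).get j)).2,
    fun j => ((((c, a) :: L).get j)).1, hbK, ?_, ?_, ?_⟩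
  · intro j
    dsimp only
    rcases List.mem_cons.mp (List.get_mem ((c, a) :: L) ⟨j.1, j.isLt⟩) with h | h
    · rw [Fin.eta] at h
      rw [h]
      exact ⟨haK, ha⟩
    · rw [Fin.eta] at h
      exact (hL _ h).2
  · intro j
    dsimp only
    rcases List.mem_cons.mp (List.get_mem ((c, a) :: L) ⟨j.1, j.isLt⟩) with h | h
    · rw [Fin.eta] at h
      rw [h]
      exact ⟨hcK, hDc⟩
    · rw [Fin.eta] at h
      exact (hL _ h).1
  · have hfin := s.list_sum_fin ((c, a) :: L)
    simp only [hsD] at hfin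
    rw [hfin, List.map_cons, List.sum_cons]
    linear_combination hwe
end

section
/- Let K be an infinite field and K(X) the field of rational functions in one variable over K. For c ∈ K let τ_c denote the K-algebra automorphism of K(X) determined by X ↦ X + c. If f ∈ K(X) satisfies τ_c(f) = f for every c ∈ K, then f lies in K (f is a constant rational function). -/
open Polynomial

lemma map_nonZeroDivisors_polyEquiv {K : Type*} [Field K] (σ : K[X] ≃ₐ[K] K[X]) :
    Submonoid.map (σ : K[X] →* K[X]) (nonZeroDivisors K[X]) = nonZeroDivisors K[X] := by
  ext p
  simp only [Submonoid.mem_map, mem_nonZeroDivisors_iff_ne_zero]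
  constructor
  · rintro ⟨q, hq, rfl⟩
    simpa using hq
  · intro hp
    refine ⟨σ.symm p, fun h0 => hp ?_, by simp⟩
    rw [← σ.apply_symm_apply p, h0, map_zero]

lemma eval_aeval_X_add_C {K : Type*} [Field K] (c t : K) (p : K[X]) :
    (Polynomial.aeval (X + C c) p).eval t = p.eval (t + c) := by
  have hcomp : Polynomial.aeval (X + C c) p = p.comp (X + C c) := by
    rw [Polynomial.comp, Polynomial.aeval_def, Polynomial.algebraMap_eq]
  rw [hcomp, Polynomial.eval_comp]
  simp

/-- Fixed field of the translations of the variable (additive part of the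
differential Galois group action in Theorem 15): if `K` is an infinite field and
`f ∈ K(X)` is fixed by every `K`-algebra automorphism `τ_c` of `K(X)` determined by
`X ↦ X + c` (`c ∈ K`), then `f` is a constant rational function, i.e. `f ∈ K`. -/
theorem fixed_by_translations_mem_base {K : Type*} [Field K] [Infinite K]
    (f : RatFunc K)
    (h : ∀ (c : K) (φ : RatFunc K ≃ₐ[K] RatFunc K),
      φ RatFunc.X = RatFunc.X + RatFunc.C c → φ f = f) :
    ∃ k : K, f = RatFunc.C k := by
  set n : K[X] := f.num with hn
  set d : K[X] := f.denom with hd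
  have hd0 : d ≠ 0 := f.denom_ne_zero
  have hinj : Function.Injective (algebraMap K[X] (RatFunc K)) :=
    RatFunc.algebraMap_injective K
  -- key polynomial identity from invariance under each translation
  have key : ∀ c a : K, n.eval (a + c) * d.eval a = n.eval a * d.eval (a + c) := by
    intro c a
    set σ : K[X] ≃ₐ[K] K[X] := Polynomial.algEquivAevalXAddC c with hσ
    set φ : RatFunc K ≃ₐ[K] RatFunc K :=
      IsLocalization.algEquivOfAlgEquiv (M := nonZeroDivisors K[X]) (RatFunc K) (RatFunc K) σ
        (map_nonZeroDivisors_polyEquiv σ) with hφ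
    have hφa : ∀ p : K[X], φ (algebraMap K[X] (RatFunc K) p) =
        algebraMap K[X] (RatFunc K) (σ p) := fun p =>
      IsLocalization.algEquivOfAlgEquiv_eq _ p
    have hφX : φ RatFunc.X = RatFunc.X + RatFunc.C c := by
      have := hφa Polynomial.X
      simpa [RatFunc.algebraMap_X, RatFunc.algebraMap_C, hσ, map_add] using this
    have hf : φ f = f := h c φ hφX
    have hrepr : f = algebraMap K[X] (RatFunc K) n / algebraMap K[X] (RatFunc K) d :=
      (RatFunc.num_div_denom f).symm
    have hσd0 : σ d ≠ 0 := by simpa using hd0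
    have hD0 : algebraMap K[X] (RatFunc K) d ≠ 0 := RatFunc.algebraMap_ne_zero hd0
    have hσD0 : algebraMap K[X] (RatFunc K) (σ d) ≠ 0 := RatFunc.algebraMap_ne_zero hσd0
    have hdiv : algebraMap K[X] (RatFunc K) (σ n) / algebraMap K[X] (RatFunc K) (σ d)
        = algebraMap K[X] (RatFunc K) n / algebraMap K[X] (RatFunc K) d := by
      calc algebraMap K[X] (RatFunc K) (σ n) / algebraMap K[X] (RatFunc K) (σ d)
          = φ f := by rw [hrepr, map_div₀, hφa, hφa]
        _ = f := hf
        _ = _ := hrepr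
    have hcross : σ n * d = n * σ d := by
      rw [div_eq_div_iff hσD0 hD0] at hdiv
      apply hinj
      simpa [map_mul] using hdiv
    have := congrArg (Polynomial.eval a) hcross
    rw [Polynomial.eval_mul, Polynomial.eval_mul, hσ,
      Polynomial.algEquivAevalXAddC_apply, Polynomial.algEquivAevalXAddC_apply,
      eval_aeval_X_add_C, eval_aeval_X_add_C] at this
    exact this
  -- choose a point where the denominator does not vanish
  have hne : ¬ ∀ a : K, d.eval a = 0 := fun H => hd0 (Polynomial.zero_of_eval_zero d H)
  push_neg at hne
  obtain ⟨a, ha⟩ := hne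
  -- the polynomial identity `d(a) • n = n(a) • d`
  have hpoly : C (d.eval a) * n = C (n.eval a) * d := by
    have hz : C (d.eval a) * n - C (n.eval a) * d = 0 := by
      apply Polynomial.zero_of_eval_zero
      intro x
      have hx := key (x - a) a
      simp only [add_sub_cancel] at hx
      simp only [Polynomial.eval_sub, Polynomial.eval_mul, Polynomial.eval_C]
      linear_combination hx
    linear_combination hz
  refine ⟨n.eval a / d.eval a, ?_⟩
  have hD0 : algebraMap K[X] (RatFunc K) d ≠ 0 := RatFunc.algebraMap_ne_zero hd0
  have hCda : (RatFunc.C (d.eval a) : RatFunc K) ≠ 0 := by simpa using ha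
  rw [map_div₀, ← RatFunc.num_div_denom f, div_eq_div_iff hD0 hCda]
  have hmap := congrArg (algebraMap K[X] (RatFunc K)) hpoly
  simp only [map_mul] at hmap
  rw [RatFunc.algebraMap_C, RatFunc.algebraMap_C] at hmap
  linear_combination hmap
end

section
/- Let f : ℂ → ℂ be a function that is differentiable as a function of a complex variable at every point of ℂ \ {0} and satisfies f(z·w) = f(z) + f(w) for all nonzero z, w ∈ ℂ. Then f(z) = 0 for every nonzero z ∈ ℂ. -/
open Complex Filter

/-- Every single-valued holomorphic homomorphism from the multiplicative group
`ℂ*` to the additive group `ℂ` is identically zero (the global obstruction to a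
logarithm underlying Corollary 11). -/
theorem holomorphic_multiplicative_to_additive_hom_is_zero (f : ℂ → ℂ)
    (hdiff : ∀ z : ℂ, z ≠ 0 → DifferentiableAt ℂ f z)
    (hmul : ∀ z w : ℂ, z ≠ 0 → w ≠ 0 → f (z * w) = f z + f w) :
    ∀ z : ℂ, z ≠ 0 → f z = 0 := by
  have h1 : f 1 = 0 := by
    have := hmul 1 1 one_ne_zero one_ne_zero
    simp at this
    exact this
  -- f (z^n) = n • f z for z ≠ 0, n ≥ 1
  have hpow : ∀ (z : ℂ), z ≠ 0 → ∀ n : ℕ, f (z ^ n) = n • f z + f 1 := by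
    intro z hz n
    induction n with
    | zero => simp
    | succ n ih =>
      have : f (z ^ (n + 1)) = f (z ^ n) + f z := by
        rw [pow_succ]
        exact hmul _ _ (pow_ne_zero _ hz) hz
      rw [this, ih]; push_cast [add_smul]; ring
  -- roots of unity are zeros of f
  have hroot : ∀ (z : ℂ) (n : ℕ), z ≠ 0 → 0 < n → z ^ n = 1 → f z = 0 := by
    intro z n hz hn hzn
    have := hpow z hz n
    rw [hzn, h1] at this
    simp at this
    rcases this with h | h
    · omega
    · exact h
  -- the sequence exp(2πi/(n+2)) tends to 1 within {1}ᶜ with f = 0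
  set u : ℕ → ℂ := fun n => Complex.exp (2 * Real.pi * I / (n + 2)) with hu
  have hune : ∀ n : ℕ, u n ≠ 1 := by
    intro n
    intro h
    rw [hu] at h
    simp only at h
    rw [Complex.exp_eq_one_iff] at h
    obtain ⟨k, hk⟩ := h
    have hn2 : ((n : ℂ) + 2) ≠ 0 := by
      exact_mod_cast (by omega : (n:ℤ) + 2 ≠ 0)
    have hI : (2 * Real.pi * I) ≠ 0 := by
      simp [Real.pi_ne_zero, I_ne_zero]
    field_simp at hk
    -- 2πI = k * (2πI) * (n+2)
    have h1k : (1 : ℂ) * (2 * Real.pi * I) = ((k : ℂ) * ((n : ℂ) + 2)) * (2 * Real.pi * I) := by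
      linear_combination (2 * Real.pi * I) * hk
    have : (1 : ℂ) = (k : ℂ) * ((n : ℂ) + 2) := mul_right_cancel₀ hI h1k
    have : (1 : ℤ) = k * (n + 2) := by exact_mod_cast this
    have hn0 : (0:ℤ) ≤ (n:ℤ) := Int.natCast_nonneg n
    rcases le_or_gt k 0 with h | h
    · nlinarith
    · nlinarith
  have hfu : ∀ n : ℕ, f (u n) = 0 := by
    intro n
    apply hroot (u n) (n + 2) (Complex.exp_ne_zero _) (by omega)
    have hn2 : ((n : ℂ) + 2) ≠ 0 := by
      exact_mod_cast (by omega : (n:ℤ) + 2 ≠ 0)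
    rw [hu]
    simp only
    rw [← Complex.exp_nat_mul]
    rw [show ((n + 2 : ℕ) : ℂ) * (2 * Real.pi * I / ((n : ℂ) + 2)) = 2 * Real.pi * I by
      push_cast
      field_simp]
    exact Complex.exp_two_pi_mul_I
  have hlim : Tendsto u atTop (nhds 1) := by
    rw [hu]
    have hr : Tendsto (fun n : ℕ => (((n : ℝ) + 2)⁻¹ : ℝ)) atTop (nhds 0) := by
      apply Tendsto.inv_tendsto_atTop
      exact tendsto_atTop_add_const_right atTop 2 tendsto_natCast_atTop_atTop
    have hrC : Tendsto (fun n : ℕ => ((((n : ℝ) + 2)⁻¹ : ℝ) : ℂ)) atTop (nhds 0) := by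
      have := (Complex.continuous_ofReal.tendsto 0).comp hr
      simpa [Function.comp_def] using this
    have : Tendsto (fun n : ℕ => 2 * Real.pi * I / (n + 2)) atTop (nhds 0) := by
      have h2 := hrC.const_mul (2 * Real.pi * I)
      rw [mul_zero] at h2
      convert h2 using 2 with n
      push_cast
      rw [div_eq_mul_inv]
    have := (Complex.continuous_exp.tendsto 0).comp this
    simpa [Function.comp_def] using this
  have hfreq : ∃ᶠ z in nhdsWithin 1 {(1 : ℂ)}ᶜ, f z = 0 := by
    have htend : Tendsto u atTop (nhdsWithin 1 {(1 : ℂ)}ᶜ) :=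
      tendsto_nhdsWithin_of_tendsto_nhds_of_eventually_within u hlim
        (Eventually.of_forall hune)
    exact htend.frequently (Frequently.of_forall hfu)
  have hU : IsOpen ({(0 : ℂ)}ᶜ : Set ℂ) := isOpen_compl_singleton
  have hana : AnalyticOnNhd ℂ f ({(0 : ℂ)}ᶜ) := by
    apply DifferentiableOn.analyticOnNhd _ hU
    intro z hz
    exact (hdiff z hz).differentiableWithinAt
  have hconn : IsPreconnected ({(0 : ℂ)}ᶜ : Set ℂ) := by
    have : (1 : Cardinal) < Module.rank ℝ ℂ := by
      rw [Complex.rank_real_complex]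
      norm_num
    exact (isConnected_compl_singleton_of_one_lt_rank this 0).isPreconnected
  have := hana.eqOn_zero_of_preconnected_of_frequently_eq_zero hconn
    (by simp : (1 : ℂ) ∈ ({(0 : ℂ)}ᶜ : Set ℂ)) hfreq
  intro z hz
  exact this hz
end
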